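/- Normalized direct-sum uncertainty relation: Let {M_a}_{a=1}^n and {N_b}_{b=1}^m be POVMs on C^d, and for k = 1,…,n+m set S_k(1/2) = max over I ⊆ {1,…,n}, J ⊆ {1,…,m} with |I| + |J| = k of λ₁( (1/2) Σ_{a∈I} M_a + (1/2) Σ_{b∈J} N_b ). Then for every density matrix ρ with outcome distributions p_a = Tr(M_a ρ) and q_b = Tr(N_b ρ), and for every k, the sum of the k largest entries of the concatenated vector p ⊕ q is at most 2·S_k(1/2). -/

import Mathlib

open scoped BigOperators ComplexOrder

/-- Sum of the `k` largest entries of `x`: the maximum of `∑ i ∈ s, x i`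
over all `k`-element index sets `s`. -/
noncomputable def kMaxSum {ι : Type*} [Fintype ι] (x : ι → ℝ) (k : ℕ) : ℝ :=
  sSup {t : ℝ | ∃ s : Finset ι, s.card = k ∧ t = ∑ i ∈ s, x i}

/-- The largest eigenvalue `λ₁(A)` of a (Hermitian) matrix `A`: the supremum of the real
points of its spectrum. -/
noncomputable def maxEig {d : ℕ} (A : Matrix (Fin d) (Fin d) ℂ) : ℝ :=
  sSup {t : ℝ | (t : ℂ) ∈ spectrum ℂ A}

/-- `S_k(l)`: the maximum over index sets `I`, `J` with `|I| + |J| = k` of the largest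
eigenvalue of `l Σ_{a∈I} M_a + (1−l) Σ_{b∈J} N_b`. -/
noncomputable def Sval {d n m : ℕ} (M : Fin n → Matrix (Fin d) (Fin d) ℂ)
    (N : Fin m → Matrix (Fin d) (Fin d) ℂ) (l : ℝ) (k : ℕ) : ℝ :=
  sSup {t : ℝ | ∃ (I : Finset (Fin n)) (J : Finset (Fin m)), I.card + J.card = k ∧
    t = maxEig ((l : ℂ) • (∑ a ∈ I, M a) + ((1 - l : ℝ) : ℂ) • (∑ b ∈ J, N b))}

lemma maxEig_set_eq {d : ℕ} {A : Matrix (Fin d) (Fin d) ℂ} (hA : A.IsHermitian) :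
    {t : ℝ | (t : ℂ) ∈ spectrum ℂ A} = Set.range hA.eigenvalues := by
  ext t
  rw [Set.mem_setOf_eq, ← Complex.coe_algebraMap, spectrum.algebraMap_mem_iff,
    hA.spectrum_real_eq_range_eigenvalues]

lemma eigenvalue_le_maxEig {d : ℕ} {A : Matrix (Fin d) (Fin d) ℂ} (hA : A.IsHermitian)
    (i : Fin d) : hA.eigenvalues i ≤ maxEig A := by
  apply le_csSup
  · rw [maxEig_set_eq hA]; exact (Set.finite_range _).bddAbove
  · rw [maxEig_set_eq hA]; exact ⟨i, rfl⟩

lemma trace_re_le_maxEig {d : ℕ} {A ρ : Matrix (Fin d) (Fin d) ℂ} (hA : A.IsHermitian)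
    (hρ : ρ.PosSemidef) (hρ1 : ρ.trace = 1) : ((A * ρ).trace).re ≤ maxEig A := by
  classical
  set V : Matrix (Fin d) (Fin d) ℂ := ↑(Matrix.IsHermitian.eigenvectorUnitary hA) with hV
  set σ : Matrix (Fin d) (Fin d) ℂ := star V * ρ * V with hσdef
  have hσ : σ.PosSemidef := by
    rw [hσdef, Matrix.star_eq_conjTranspose]
    exact hρ.conjTranspose_mul_mul_same V
  have hVV : V * star V = 1 := by
    have := (Matrix.IsHermitian.eigenvectorUnitary hA).2
    rw [Matrix.mem_unitaryGroup_iff] at this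
    exact this
  have h1 : (A * ρ).trace = ∑ i, (hA.eigenvalues i : ℂ) * σ i i := by
    conv_lhs => rw [hA.spectral_theorem]
    rw [Unitary.conjStarAlgAut_apply, ← hV]
    rw [show V * Matrix.diagonal (RCLike.ofReal ∘ hA.eigenvalues) * star V * ρ
        = (V * Matrix.diagonal (RCLike.ofReal ∘ hA.eigenvalues)) * (star V * ρ) from
          mul_assoc _ _ _,
      Matrix.trace_mul_comm, show (star V * ρ) * (V * Matrix.diagonal (RCLike.ofReal ∘ hA.eigenvalues))
        = (star V * ρ * V) * Matrix.diagonal (RCLike.ofReal ∘ hA.eigenvalues) from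
          (mul_assoc _ _ _).symm,
      Matrix.trace_mul_comm]
    simp [Matrix.trace, Matrix.diag, Matrix.diagonal_mul, mul_comm]
    rfl
  have hdiag : ∀ i, 0 ≤ (σ i i).re := by
    intro i
    have := hσ.re_dotProduct_nonneg (Pi.single i 1)
    simpa [dotProduct, Matrix.mulVec, Pi.single_apply, Finset.sum_ite_eq] using this
  have htr : ∑ i, (σ i i).re = 1 := by
    have : σ.trace = 1 := by
      rw [hσdef, Matrix.trace_mul_cycle, hVV, one_mul, hρ1]
    calc ∑ i, (σ i i).re = (σ.trace).re := by
          simp [Matrix.trace, Matrix.diag, Complex.re_sum]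
      _ = 1 := by rw [this]; simp
  rw [h1]
  rw [Complex.re_sum]
  calc ∑ i, ((hA.eigenvalues i : ℂ) * σ i i).re
      = ∑ i, hA.eigenvalues i * (σ i i).re := by
        simp [Complex.re_ofReal_mul]
    _ ≤ ∑ i, maxEig A * (σ i i).re := by
        apply Finset.sum_le_sum
        intro i _
        exact mul_le_mul_of_nonneg_right (eigenvalue_le_maxEig hA i) (hdiag i)
    _ = maxEig A := by rw [← Finset.mul_sum, htr, mul_one]

/-- Normalized direct-sum uncertainty relation: for every density matrix `ρ` and every
`k = 1, …, n + m`, the sum of the `k` largest entries of the concatenation `p ⊕ q` of the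
two outcome distributions is at most `2·S_k(1/2)`. -/
theorem normalized_dsmur {d n m : ℕ}
    (M : Fin n → Matrix (Fin d) (Fin d) ℂ)
    (hMpos : ∀ a, (M a).PosSemidef) (hMsum : ∑ a, M a = 1)
    (N : Fin m → Matrix (Fin d) (Fin d) ℂ)
    (hNpos : ∀ b, (N b).PosSemidef) (hNsum : ∑ b, N b = 1)
    (ρ : Matrix (Fin d) (Fin d) ℂ) (hρ : ρ.PosSemidef) (hρ1 : ρ.trace = 1) :
    ∀ k ≤ n + m,
      kMaxSum (Fin.append (fun a => ((M a * ρ).trace).re)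
          (fun b => ((N b * ρ).trace).re)) k
        ≤ 2 * Sval M N (1 / 2) k := by
  classical
  intro k hk
  obtain ⟨s₀, -, hs₀⟩ := Finset.exists_subset_card_eq (s := (Finset.univ : Finset (Fin (n + m)))) (n := k)
    (by simpa using hk)
  have hne : {t : ℝ | ∃ s : Finset (Fin (n + m)), s.card = k ∧
      t = ∑ i ∈ s, (Fin.append (fun a => ((M a * ρ).trace).re)
        (fun b => ((N b * ρ).trace).re)) i}.Nonempty :=
    ⟨∑ i ∈ s₀, (Fin.append (fun a => ((M a * ρ).trace).re)
        (fun b => ((N b * ρ).trace).re)) i, ⟨s₀, hs₀, rfl⟩⟩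
  rw [kMaxSum]
  apply csSup_le hne
  rintro t ⟨s, hcard, rfl⟩
  set u : Finset (Fin n ⊕ Fin m) := s.map finSumFinEquiv.symm.toEmbedding with hu
  set I := u.toLeft with hI
  set J := u.toRight with hJ
  have hIJcard : I.card + J.card = k := by
    rw [hI, hJ, Finset.card_toLeft_add_card_toRight, hu, Finset.card_map]
    exact hcard
  have hus : u.map finSumFinEquiv.toEmbedding = s := by
    rw [hu, Finset.map_map]
    ext x
    simp
  have hdisj : I.disjSum J = u := Finset.toLeft_disjSum_toRight
  have hsplit : ∑ i ∈ s, (Fin.append (fun a => ((M a * ρ).trace).re)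
          (fun b => ((N b * ρ).trace).re)) i
      = ∑ a ∈ I, ((M a * ρ).trace).re + ∑ b ∈ J, ((N b * ρ).trace).re := by
    rw [← hus, Finset.sum_map, ← hdisj, Finset.sum_disjSum]
    simp [finSumFinEquiv_apply_left, finSumFinEquiv_apply_right, Fin.append_left,
      Fin.append_right]
  rw [hsplit]
  set A : Matrix (Fin d) (Fin d) ℂ :=
    ((1/2 : ℝ) : ℂ) • (∑ a ∈ I, M a) + ((1 - 1/2 : ℝ) : ℂ) • (∑ b ∈ J, N b) with hA
  have hsumM : (∑ a ∈ I, M a).IsHermitian := by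
    unfold Matrix.IsHermitian
    rw [Matrix.conjTranspose_sum]
    exact Finset.sum_congr rfl fun a _ => (hMpos a).1.eq
  have hsumN : (∑ b ∈ J, N b).IsHermitian := by
    unfold Matrix.IsHermitian
    rw [Matrix.conjTranspose_sum]
    exact Finset.sum_congr rfl fun b _ => (hNpos b).1.eq
  have hAH : A.IsHermitian := by
    unfold Matrix.IsHermitian
    rw [hA, Matrix.conjTranspose_add, Matrix.conjTranspose_smul, Matrix.conjTranspose_smul,
      Complex.star_def, Complex.conj_ofReal, Complex.conj_ofReal, hsumM.eq, hsumN.eq]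
  have htrace : ∑ a ∈ I, ((M a * ρ).trace).re + ∑ b ∈ J, ((N b * ρ).trace).re
      = 2 * ((A * ρ).trace).re := by
    have h : (A * ρ).trace = ((1/2 : ℝ) : ℂ) *
        ((∑ a ∈ I, (M a * ρ).trace) + (∑ b ∈ J, (N b * ρ).trace)) := by
      rw [hA]
      simp only [Matrix.add_mul, Matrix.smul_mul, Matrix.trace_add, Matrix.trace_smul,
        Matrix.sum_mul, Matrix.trace_sum, smul_eq_mul]
      push_cast
      ring
    rw [h, Complex.re_ofReal_mul, Complex.add_re, Complex.re_sum, Complex.re_sum]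
    ring
  rw [htrace]
  have hbdd : BddAbove {t : ℝ | ∃ (I' : Finset (Fin n)) (J' : Finset (Fin m)),
      I'.card + J'.card = k ∧ t = maxEig ((((1:ℝ)/2 : ℝ) : ℂ) • (∑ a ∈ I', M a) +
        ((1 - (1:ℝ)/2 : ℝ) : ℂ) • (∑ b ∈ J', N b))} := by
    apply Set.Finite.bddAbove
    apply Set.Finite.subset (Set.finite_univ.image
      (fun p : Finset (Fin n) × Finset (Fin m) =>
        maxEig ((((1:ℝ)/2 : ℝ) : ℂ) • (∑ a ∈ p.1, M a) +
          ((1 - (1:ℝ)/2 : ℝ) : ℂ) • (∑ b ∈ p.2, N b))))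
    rintro t ⟨I', J', -, rfl⟩
    exact ⟨(I', J'), trivial, rfl⟩
  have h2 : maxEig A ≤ Sval M N (1 / 2) k := le_csSup hbdd ⟨I, J, hIJcard, by rw [hA]⟩
  have h1 := trace_re_le_maxEig hAH hρ hρ1
  linarith
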